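/- For any n-bit string t, the product of stabilizer generators ∏_{v : t_v = 1} S_v equals (-1)^{(1/2) t·At} X^t Z^{At}, where A is the adjacency matrix of the graph. -/

import Mathlib

open Finset

/-- Tensor-product Pauli `X^s`: flips the bits in the support of `s`. -/
noncomputable def XOp (n : ℕ) (s : Fin n → Bool) :
    Module.End ℂ ((Fin n → Bool) → ℂ) :=
  LinearMap.funLeft ℂ ℂ (fun x w => xor (x w) (s w))

/-- Tensor-product Pauli `Z^s`: phase `(-1)^{s·x}` on basis state `x`. -/
noncomputable def ZOp (n : ℕ) (s : Fin n → Bool) :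
    Module.End ℂ ((Fin n → Bool) → ℂ) where
  toFun f := fun x =>
    (-1 : ℂ) ^ (Finset.univ.filter (fun w => s w = true ∧ x w = true)).card * f x
  map_add' f g := by funext x; simp [mul_add]
  map_smul' c f := by funext x; simp [smul_eq_mul]; ring

/-- The graph state of a graph `G` on `n` vertices, as a vector in
`(ℂ²)^{⊗n} ≃ ((Fin n → Bool) → ℂ)`. -/
noncomputable def graphState {n : ℕ} (G : SimpleGraph (Fin n)) [DecidableRel G.Adj] :
    (Fin n → Bool) → ℂ :=
  fun x => (Real.sqrt (2 ^ n) : ℂ)⁻¹ *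
    (-1 : ℂ) ^ (Finset.univ.filter
      (fun p : Fin n × Fin n =>
        p.1 < p.2 ∧ G.Adj p.1 p.2 ∧ x p.1 = true ∧ x p.2 = true)).card

/-- Indicator bit string of a single vertex. -/
def indVec (n : ℕ) (v : Fin n) : Fin n → Bool := fun w => decide (w = v)

/-- Row `v` of the adjacency matrix of `G` as a bit string (the neighbourhood of `v`). -/
def adjRow {n : ℕ} (G : SimpleGraph (Fin n)) [DecidableRel G.Adj] (v : Fin n) :
    Fin n → Bool := fun w => decide (G.Adj v w)

/-- Stabilizer generator `S_v = X_v Z^{A 1_v}`. -/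
noncomputable def stabGen {n : ℕ} (G : SimpleGraph (Fin n)) [DecidableRel G.Adj]
    (v : Fin n) : Module.End ℂ ((Fin n → Bool) → ℂ) :=
  XOp n (indVec n v) * ZOp n (adjRow G v)

section Aux
open Finset

lemma sign_card' {ι : Type*} [Fintype ι] (p : ι → Prop) [DecidablePred p] :
    (-1 : ℂ) ^ (Finset.univ.filter p).card = ∏ w, if p w then (-1 : ℂ) else 1 := by
  rw [← Finset.prod_const, Finset.prod_filter]

lemma XZ_mul {n : ℕ} (s1 r1 s2 r2 : Fin n → Bool) :
    (XOp n s1 * ZOp n r1) * (XOp n s2 * ZOp n r2) =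
      ((-1 : ℂ) ^ (Finset.univ.filter (fun w => r1 w = true ∧ s2 w = true)).card) •
        (XOp n (fun w => xor (s1 w) (s2 w)) * ZOp n (fun w => xor (r1 w) (r2 w))) := by
  apply LinearMap.ext; intro f
  funext x
  simp only [Module.End.mul_apply, LinearMap.smul_apply, Pi.smul_apply, smul_eq_mul,
    XOp, ZOp, LinearMap.funLeft_apply, LinearMap.coe_mk, AddHom.coe_mk]
  simp only [Bool.xor_assoc]
  rw [← mul_assoc, ← mul_assoc]
  congr 1
  rw [sign_card', sign_card', sign_card', sign_card',
    ← Finset.prod_mul_distrib, ← Finset.prod_mul_distrib]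
  apply Finset.prod_congr rfl
  intro w _
  rcases Bool.eq_false_or_eq_true (r1 w) with h1|h1 <;>
  rcases Bool.eq_false_or_eq_true (r2 w) with h2|h2 <;>
  rcases Bool.eq_false_or_eq_true (s2 w) with h3|h3 <;>
  rcases Bool.eq_false_or_eq_true (x w) with h4|h4 <;>
  rcases Bool.eq_false_or_eq_true (s1 w) with h5|h5 <;>
  simp [h1, h2, h3, h4, h5]

lemma XOp_false {n : ℕ} : XOp n (fun _ => false) = 1 := by
  apply LinearMap.ext; intro f
  funext x
  simp [XOp]

lemma ZOp_false {n : ℕ} : ZOp n (fun _ => false) = 1 := by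
  apply LinearMap.ext; intro f
  funext x
  simp [ZOp]

lemma edge_card_insert {n : ℕ} (G : SimpleGraph (Fin n)) [DecidableRel G.Adj]
    (a : Fin n) (s : Finset (Fin n)) (ha : a ∉ s) :
    (Finset.univ.filter (fun p : Fin n × Fin n =>
        p.1 < p.2 ∧ G.Adj p.1 p.2 ∧ p.1 ∈ insert a s ∧ p.2 ∈ insert a s)).card =
      (Finset.univ.filter (fun p : Fin n × Fin n =>
        p.1 < p.2 ∧ G.Adj p.1 p.2 ∧ p.1 ∈ s ∧ p.2 ∈ s)).card +
      (Finset.univ.filter (fun u => G.Adj a u ∧ u ∈ s)).card := by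
  have hTS : (Finset.univ.filter (fun p : Fin n × Fin n =>
        p.1 < p.2 ∧ G.Adj p.1 p.2 ∧ p.1 ∈ insert a s ∧ p.2 ∈ insert a s)) =
      (Finset.univ.filter (fun p : Fin n × Fin n =>
        p.1 < p.2 ∧ G.Adj p.1 p.2 ∧ p.1 ∈ s ∧ p.2 ∈ s)) ∪
      (Finset.univ.filter (fun u => G.Adj a u ∧ u ∈ s)).image
        (fun u => if a < u then (a, u) else (u, a)) := by
    ext ⟨x, y⟩
    simp only [Finset.mem_filter, Finset.mem_univ, true_and, Finset.mem_union,
      Finset.mem_insert, Finset.mem_image]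
    constructor
    · rintro ⟨hlt, hadj, hx, hy⟩
      rcases hx with rfl | hx
      · have hy' : y ∈ s := by
          rcases hy with rfl | hy
          · exact absurd hlt (lt_irrefl _)
          · exact hy
        exact Or.inr ⟨y, ⟨hadj, hy'⟩, by simp [hlt]⟩
      · rcases hy with rfl | hy
        · refine Or.inr ⟨x, ⟨G.adj_symm hadj, hx⟩, ?_⟩
          rw [if_neg (asymm hlt)]
        · exact Or.inl ⟨hlt, hadj, hx, hy⟩
    · rintro (⟨hlt, hadj, hx, hy⟩ | ⟨u, ⟨hadj, hu⟩, heq⟩)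
      · exact ⟨hlt, hadj, Or.inr hx, Or.inr hy⟩
      · have hne : a ≠ u := fun h => ha (h ▸ hu)
        by_cases hau : a < u
        · rw [if_pos hau] at heq
          obtain ⟨rfl, rfl⟩ := Prod.mk.inj heq.symm
          exact ⟨hau, hadj, Or.inl rfl, Or.inr hu⟩
        · have hua : u < a := lt_of_le_of_ne (le_of_not_gt hau) (fun h => hne h.symm)
          rw [if_neg hau] at heq
          obtain ⟨rfl, rfl⟩ := Prod.mk.inj heq.symm
          exact ⟨hua, G.adj_symm hadj, Or.inr hu, Or.inl rfl⟩
  rw [hTS, Finset.card_union_of_disjoint, Finset.card_image_of_injOn]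
  · intro u hu u' hu' h
    have hus : u ∈ s := (Finset.mem_filter.mp (Finset.mem_coe.mp hu)).2.2
    have hu's : u' ∈ s := (Finset.mem_filter.mp (Finset.mem_coe.mp hu')).2.2
    dsimp only at h
    by_cases h1 : a < u <;> by_cases h2 : a < u'
    · rw [if_pos h1, if_pos h2] at h
      exact (Prod.mk.inj h).2
    · rw [if_pos h1, if_neg h2] at h
      obtain ⟨he, _⟩ := Prod.mk.inj h
      subst he
      exact absurd hu's ha
    · rw [if_neg h1, if_pos h2] at h
      obtain ⟨he, _⟩ := Prod.mk.inj h
      subst he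
      exact absurd hus ha
    · rw [if_neg h1, if_neg h2] at h
      exact (Prod.mk.inj h).1
  · rw [Finset.disjoint_left]
    rintro ⟨x, y⟩ hS hM
    simp only [Finset.mem_filter, Finset.mem_univ, true_and] at hS
    simp only [Finset.mem_image, Finset.mem_filter, Finset.mem_univ, true_and] at hM
    obtain ⟨u, ⟨hadj, hu⟩, heq⟩ := hM
    by_cases hau : a < u
    · rw [if_pos hau] at heq
      obtain ⟨rfl, rfl⟩ := Prod.mk.inj heq.symm
      exact ha hS.2.2.1
    · rw [if_neg hau] at heq
      obtain ⟨rfl, rfl⟩ := Prod.mk.inj heq.symm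
      exact ha hS.2.2.2

lemma nbr_filter_insert {n : ℕ} (G : SimpleGraph (Fin n)) [DecidableRel G.Adj]
    (a : Fin n) (s : Finset (Fin n)) (ha : a ∉ s) (w : Fin n) :
    (fun w => xor (adjRow G a w)
        (decide (Odd (Finset.univ.filter (fun u => G.Adj w u ∧ u ∈ s)).card))) w =
      decide (Odd (Finset.univ.filter (fun u => G.Adj w u ∧ u ∈ insert a s)).card) := by
  by_cases hwa : G.Adj w a
  · have hfil : Finset.univ.filter (fun u => G.Adj w u ∧ u ∈ insert a s) =
        insert a (Finset.univ.filter (fun u => G.Adj w u ∧ u ∈ s)) := by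
      ext u
      simp only [Finset.mem_filter, Finset.mem_univ, true_and, Finset.mem_insert]
      constructor
      · rintro ⟨h1, rfl | h2⟩
        · exact Or.inl rfl
        · exact Or.inr ⟨h1, h2⟩
      · rintro (rfl | ⟨h1, h2⟩)
        · exact ⟨hwa, Or.inl rfl⟩
        · exact ⟨h1, Or.inr h2⟩
    have hna : a ∉ Finset.univ.filter (fun u => G.Adj w u ∧ u ∈ s) := by
      simp [ha]
    rw [hfil, Finset.card_insert_of_notMem hna]
    have haw : adjRow G a w = true := by
      simp [adjRow, G.adj_symm hwa]
    simp only [haw, Bool.true_xor, Nat.odd_add_one]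
    rcases Nat.even_or_odd ((Finset.univ.filter (fun u => G.Adj w u ∧ u ∈ s)).card) with h | h
    · simp [h, Nat.not_odd_iff_even.mpr h]
    · simp [h, Nat.not_even_iff_odd.mpr h]
  · have hfil : Finset.univ.filter (fun u => G.Adj w u ∧ u ∈ insert a s) =
        Finset.univ.filter (fun u => G.Adj w u ∧ u ∈ s) := by
      ext u
      simp only [Finset.mem_filter, Finset.mem_univ, true_and, Finset.mem_insert]
      constructor
      · rintro ⟨h1, rfl | h2⟩
        · exact absurd h1 hwa
        · exact ⟨h1, h2⟩
      · rintro ⟨h1, h2⟩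
        exact ⟨h1, Or.inr h2⟩
    have haw : adjRow G a w = false := by
      simp [adjRow]
      exact fun h => hwa (G.adj_symm h)
    rw [hfil]
    simp [haw]

lemma key_lemma {n : ℕ} (G : SimpleGraph (Fin n)) [DecidableRel G.Adj]
    (s : Finset (Fin n)) :
    ∀ (hcomm : (s : Set (Fin n)).Pairwise
      (fun a b => Commute (stabGen G a) (stabGen G b))),
    s.noncommProd (fun v => stabGen G v) hcomm =
      ((-1 : ℂ) ^ (Finset.univ.filter
            (fun p : Fin n × Fin n =>
              p.1 < p.2 ∧ G.Adj p.1 p.2 ∧ p.1 ∈ s ∧ p.2 ∈ s)).card) •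
        (XOp n (fun w => decide (w ∈ s)) *
          ZOp n (fun w => decide
            (Odd (Finset.univ.filter (fun u => G.Adj w u ∧ u ∈ s)).card))) := by
  induction s using Finset.induction_on with
  | empty =>
    intro hcomm
    rw [Finset.noncommProd_empty]
    have h1 : (Finset.univ.filter
        (fun p : Fin n × Fin n =>
          p.1 < p.2 ∧ G.Adj p.1 p.2 ∧ p.1 ∈ (∅ : Finset (Fin n)) ∧ p.2 ∈ (∅ : Finset (Fin n)))) = ∅ := by
      simp
    have h2 : (fun w : Fin n => decide (w ∈ (∅ : Finset (Fin n)))) = fun _ => false := by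
      funext w; simp
    have h3 : (fun w : Fin n => decide
        (Odd (Finset.univ.filter (fun u => G.Adj w u ∧ u ∈ (∅ : Finset (Fin n)))).card)) =
        fun _ => false := by
      funext w; simp
    rw [h1, h2, h3, XOp_false, ZOp_false]
    simp
  | @insert a s' ha ih =>
    intro hcomm
    rw [Finset.noncommProd_insert_of_notMem _ _ _ _ ha,
      ih (hcomm.mono (fun _ h => Finset.mem_insert_of_mem h))]
    rw [mul_smul_comm]
    rw [show stabGen G a = XOp n (indVec n a) * ZOp n (adjRow G a) from rfl, XZ_mul]
    rw [smul_smul]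
    have hsign : ((-1 : ℂ) ^ (Finset.univ.filter
          (fun p : Fin n × Fin n =>
            p.1 < p.2 ∧ G.Adj p.1 p.2 ∧ p.1 ∈ s' ∧ p.2 ∈ s')).card) *
        ((-1 : ℂ) ^ (Finset.univ.filter
          (fun w => adjRow G a w = true ∧ decide (w ∈ s') = true)).card) =
        ((-1 : ℂ) ^ (Finset.univ.filter
          (fun p : Fin n × Fin n =>
            p.1 < p.2 ∧ G.Adj p.1 p.2 ∧ p.1 ∈ insert a s' ∧ p.2 ∈ insert a s')).card) := by
      rw [edge_card_insert G a s' ha, pow_add]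
      congr 2
      exact congrArg Finset.card (Finset.filter_congr (fun u _ => by simp [adjRow]))
    have hX : (fun w => xor (indVec n a w) (decide (w ∈ s'))) =
        (fun w => decide (w ∈ insert a s')) := by
      funext w
      by_cases hw : w = a
      · subst hw
        simp [indVec, ha]
      · simp [indVec, hw, Finset.mem_insert]
    have hZ : (fun w => xor (adjRow G a w)
          (decide (Odd (Finset.univ.filter (fun u => G.Adj w u ∧ u ∈ s')).card))) =
        (fun w => decide
          (Odd (Finset.univ.filter (fun u => G.Adj w u ∧ u ∈ insert a s')).card)) := by
      funext w
      exact nbr_filter_insert G a s' ha w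
    rw [hsign, hX, hZ]

end Aux

/-- The product of the stabilizer generators over the support of a bit string `t`
equals `(-1)^{(1/2) t·At} X^t Z^{At}`, where `(1/2) t·At` is the number of edges
with both endpoints in the support of `t` and `At` is the adjacency matrix acting
on `t` over F₂. -/
theorem prod_stabGen_eq {n : ℕ} (G : SimpleGraph (Fin n)) [DecidableRel G.Adj]
    (t : Fin n → Bool)
    (hcomm : ((Finset.univ.filter (fun v => t v = true)) : Set (Fin n)).Pairwise
      (fun a b => Commute (stabGen G a) (stabGen G b))) :
    (Finset.univ.filter (fun v => t v = true)).noncommProd (fun v => stabGen G v) hcomm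
      = ((-1 : ℂ) ^ (Finset.univ.filter
            (fun p : Fin n × Fin n =>
              p.1 < p.2 ∧ G.Adj p.1 p.2 ∧ t p.1 = true ∧ t p.2 = true)).card) •
          (XOp n t *
            ZOp n (fun w => decide
              (Odd (Finset.univ.filter (fun u => G.Adj w u ∧ t u = true)).card))) := by
  rw [key_lemma G (Finset.univ.filter (fun v => t v = true)) hcomm]
  have hc : (Finset.univ.filter (fun p : Fin n × Fin n =>
        p.1 < p.2 ∧ G.Adj p.1 p.2 ∧ p.1 ∈ Finset.univ.filter (fun v => t v = true) ∧
          p.2 ∈ Finset.univ.filter (fun v => t v = true))).card =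
      (Finset.univ.filter (fun p : Fin n × Fin n =>
        p.1 < p.2 ∧ G.Adj p.1 p.2 ∧ t p.1 = true ∧ t p.2 = true)).card :=
    congrArg Finset.card (Finset.filter_congr (fun p _ => by simp))
  have hX : (fun w => decide (w ∈ Finset.univ.filter (fun v => t v = true))) = t := by
    funext w
    simp
  have hZ : (fun w : Fin n => decide (Odd (Finset.univ.filter
        (fun u => G.Adj w u ∧ u ∈ Finset.univ.filter (fun v => t v = true))).card)) =
      (fun w : Fin n => decide (Odd (Finset.univ.filter
        (fun u => G.Adj w u ∧ t u = true)).card)) := by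
    funext w
    congr 2
    exact congrArg Finset.card (Finset.filter_congr (fun u _ => by simp))
  rw [hc, hX, hZ]
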